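/- Let C be an (n,k)-linear code with generator matrix G and parity-check matrix H, and A_1,...,A_ℓ ⊆ [n]. Then dim(H_{A_1} ∩ ... ∩ H_{A_ℓ}) = n − k + Σ_{i=1}^ℓ rank(G|_{\bar A_i}) − rank(ℋ), where ℋ is the block matrix whose first row block is [I_n|_{\bar A_1}, ..., I_n|_{\bar A_ℓ}] and whose subsequent row blocks place G|_{\bar A_i} in the i-th column block. -/

import Mathlib

open Matrix

/-- Span of the columns of `H` indexed by the finite set `A`. -/
noncomputable def colSpan {F : Type} [Field F] {k n : ℕ} (V : Matrix (Fin k) (Fin n) F)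
    (A : Finset (Fin n)) : Submodule F (Fin k → F) :=
  Submodule.span F ((fun j => fun r => V r j) '' (A : Set (Fin n)))

/-- The block matrix `ℋ_{A_1,…,A_ℓ}[G]`: column block `i` (indexed by `\bar A_i`)
consists of the columns of the `n×n` identity indexed by `\bar A_i` in the first row block,
stacked over `G|_{\bar A_i}` placed in the `(i+1)`-th row block, zeros elsewhere. -/
def Hmat {F : Type} [Field F] {k ℓ : ℕ} {ι : Type} [Fintype ι] [DecidableEq ι]
    (G : Matrix (Fin k) ι F) (A : Fin ℓ → Finset ι) :
    Matrix (ι ⊕ (Fin ℓ × Fin k)) (Σ i : Fin ℓ, {x // x ∈ (A i)ᶜ}) F :=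
  Matrix.of fun r c =>
    match r with
    | Sum.inl r => if r = c.2.1 then (1 : F) else 0
    | Sum.inr p => if p.1 = c.1 then G p.2 c.2.1 else 0

namespace DIR
variable {F : Type} [Field F] {n : ℕ}

/-- coordinate subspace supported on `A` -/
def coordSub (F : Type) [Field F] {n : ℕ} (A : Finset (Fin n)) : Submodule F (Fin n → F) where
  carrier := {v | ∀ j ∉ A, v j = 0}
  add_mem' := by intro a b ha hb j hj; simp [ha j hj, hb j hj]
  zero_mem' := fun j hj => rfl
  smul_mem' := by intro c a ha j hj; simp [ha j hj]

lemma mem_coordSub {A : Finset (Fin n)} {v : Fin n → F} :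
    v ∈ coordSub F A ↔ ∀ j ∉ A, v j = 0 := Iff.rfl

lemma single_mem_coordSub {A : Finset (Fin n)} {j : Fin n} (hj : j ∈ A) (x : F) :
    Pi.single j x ∈ coordSub F A := by
  intro j' hj'
  have h : j' ≠ j := fun h => hj' (h ▸ hj)
  simp [Pi.single_apply, h]

lemma coordSub_eq_span (A : Finset (Fin n)) :
    coordSub F A = Submodule.span F ((fun j => Pi.single j (1 : F)) '' (A : Set (Fin n))) := by
  apply le_antisymm
  · intro v hv
    have hv' : v = ∑ j ∈ A, Pi.single j (v j) := by
      conv_lhs => rw [← Finset.univ_sum_single v]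
      refine (Finset.sum_subset (Finset.subset_univ A) ?_).symm
      intro j _ hj
      rw [hv j hj, Pi.single_zero]
    rw [hv']
    refine Submodule.sum_mem _ fun j hj => ?_
    have : (Pi.single j (v j) : Fin n → F) = v j • (Pi.single j 1 : Fin n → F) := by
      funext r
      simp [Pi.single_apply, mul_ite]
    rw [this]
    exact Submodule.smul_mem _ _ (Submodule.subset_span ⟨j, hj, rfl⟩)
  · rw [Submodule.span_le]
    rintro - ⟨j, hj, rfl⟩
    exact single_mem_coordSub hj 1

/-- dot product bilinear form -/
def Bd (F : Type) [Field F] (n : ℕ) : LinearMap.BilinForm F (Fin n → F) :=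
  LinearMap.mk₂ F (fun v w => v ⬝ᵥ w)
    (fun a b c => add_dotProduct a b c)
    (fun r a b => smul_dotProduct r a b)
    (fun a b c => dotProduct_add a b c)
    (fun r a b => dotProduct_smul r a b)

@[simp] lemma Bd_apply (v w : Fin n → F) : Bd F n v w = v ⬝ᵥ w := rfl

lemma Bd_isSymm : (Bd F n).IsSymm := ⟨fun v w => by
  simp [dotProduct_comm]⟩

lemma Bd_refl : (Bd F n).IsRefl := Bd_isSymm.isRefl

lemma Bd_nondeg : (Bd F n).Nondegenerate := ⟨fun v h => dotProduct_eq_zero v h,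
  fun w h => dotProduct_eq_zero w (fun v => by rw [dotProduct_comm]; exact h v)⟩

lemma orth_iSup {ι : Type*} (W : ι → Submodule F (Fin n → F)) :
    (Bd F n).orthogonal (⨆ i, W i) = ⨅ i, (Bd F n).orthogonal (W i) := by
  apply le_antisymm
  · refine le_iInf fun i => ?_
    intro x hx
    rw [LinearMap.BilinForm.mem_orthogonal_iff] at hx ⊢
    exact fun w hw => hx w (le_iSup W i hw)
  · intro x hx
    rw [LinearMap.BilinForm.mem_orthogonal_iff]
    intro w hw
    have : (⨆ i, W i) ≤ LinearMap.ker ((Bd F n).flip x) := by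
      refine iSup_le fun i w' hw' => ?_
      have hxi := (Submodule.mem_iInf _).1 hx i
      exact LinearMap.mem_ker.2 ((LinearMap.BilinForm.mem_orthogonal_iff.1 hxi) w' hw')
    exact this hw

section Maps
variable {k ℓ : ℕ} (G : Matrix (Fin k) (Fin n) F) (A : Fin ℓ → Finset (Fin n))

/-- extension-by-zero matrix for block `i` -/
def Emat (A : Fin ℓ → Finset (Fin n)) (i : Fin ℓ) :
    Matrix (Fin n) {x // x ∈ (A i)ᶜ} F :=
  Matrix.of fun r c => if r = c.1 then 1 else 0

noncomputable def ei (i : Fin ℓ) : ({x // x ∈ (A i)ᶜ} → F) →ₗ[F] (Fin n → F) :=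
  (Emat A i).mulVecLin

noncomputable def gi (i : Fin ℓ) : ({x // x ∈ (A i)ᶜ} → F) →ₗ[F] (Fin k → F) :=
  (G.submatrix id (fun x : {x // x ∈ (A i)ᶜ} => x.1)).mulVecLin

lemma ei_apply (i : Fin ℓ) (x : {x // x ∈ (A i)ᶜ} → F) (r : Fin n) :
    ei A i x r = if h : r ∈ (A i)ᶜ then x ⟨r, h⟩ else 0 := by
  rw [ei, mulVecLin_apply]
  show ∑ c : {x // x ∈ (A i)ᶜ}, Emat A i r c * x c = _
  split
  · next h =>
    rw [Fintype.sum_eq_single ⟨r, h⟩]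
    · simp [Emat]
    · intro c hc
      have : r ≠ c.1 := fun he => hc (Subtype.ext he.symm)
      simp [Emat, this]
  · next h =>
    refine Finset.sum_eq_zero fun c _ => ?_
    have : r ≠ c.1 := fun he => h (he ▸ c.2)
    simp [Emat, this]

lemma Gm_ei (i : Fin ℓ) (x : {x // x ∈ (A i)ᶜ} → F) :
    G.mulVecLin (ei A i x) = gi G A i x := by
  funext s
  rw [mulVecLin_apply, gi, mulVecLin_apply]
  show ∑ j, G s j * ei A i x j = ∑ c : {x // x ∈ (A i)ᶜ},
      (G.submatrix id (fun x : {x // x ∈ (A i)ᶜ} => x.1)) s c * x c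
  have h1 : ∑ j, G s j * ei A i x j = ∑ j ∈ (A i)ᶜ, G s j * ei A i x j := by
    refine (Finset.sum_subset (Finset.subset_univ _) ?_).symm
    intro j _ hj
    rw [ei_apply, dif_neg hj, mul_zero]
  rw [h1, Finset.sum_subtype ((A i)ᶜ) (fun _ => Iff.rfl) (fun j => G s j * ei A i x j)]
  refine Finset.sum_congr rfl fun c _ => ?_
  rw [ei_apply, dif_pos c.2, submatrix_apply]
  congr

lemma ei_mem_coordSub (i : Fin ℓ) (x : {x // x ∈ (A i)ᶜ} → F) :
    ei A i x ∈ coordSub F ((A i)ᶜ) := by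
  intro j hj
  rw [ei_apply, dif_neg hj]

lemma ei_restrict (i : Fin ℓ) (w : Fin n → F) (hw : w ∈ coordSub F ((A i)ᶜ)) :
    ei A i (fun c => w c.1) = w := by
  funext r
  rw [ei_apply]
  split
  · rfl
  · next h => exact (hw r h).symm

noncomputable def Smap : (∀ i : Fin ℓ, ({x // x ∈ (A i)ᶜ} → F)) →ₗ[F] (Fin n → F) :=
  ∑ i, (ei A i) ∘ₗ LinearMap.proj i

noncomputable def Tmap : (∀ i : Fin ℓ, ({x // x ∈ (A i)ᶜ} → F)) →ₗ[F] (Fin ℓ × Fin k → F) :=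
  LinearMap.pi fun p => (LinearMap.proj p.2) ∘ₗ (gi G A p.1) ∘ₗ (LinearMap.proj p.1)

lemma Smap_apply (x : ∀ i : Fin ℓ, ({x // x ∈ (A i)ᶜ} → F)) : Smap A x = ∑ i, ei A i (x i) := by
  rw [Smap, LinearMap.sum_apply]
  rfl

lemma Tmap_apply (x : ∀ i : Fin ℓ, ({x // x ∈ (A i)ᶜ} → F)) (p : Fin ℓ × Fin k) : Tmap G A x p = gi G A p.1 (x p.1) p.2 := rfl

lemma mem_ker_Tmap {x : ∀ i : Fin ℓ, ({x // x ∈ (A i)ᶜ} → F)} : x ∈ LinearMap.ker (Tmap G A) ↔ ∀ i, gi G A i (x i) = 0 := by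
  rw [LinearMap.mem_ker]
  constructor
  · intro h i
    funext s
    exact congrFun h (i, s)
  · intro h
    funext p
    rw [Tmap_apply, h p.1]
    rfl

lemma Phi_inl (x : ∀ i : Fin ℓ, ({x // x ∈ (A i)ᶜ} → F)) (r : Fin n) :
    (Hmat G A).mulVecLin (fun p => x p.1 p.2) (Sum.inl r) = Smap A x r := by
  rw [mulVecLin_apply, Smap_apply]
  show ∑ p : Σ i : Fin ℓ, {x // x ∈ (A i)ᶜ},
      Hmat G A (Sum.inl r) p * x p.1 p.2 = _
  rw [← Finset.univ_sigma_univ, Finset.sum_sigma]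
  rw [Finset.sum_apply]
  refine Finset.sum_congr rfl fun i _ => ?_
  show ∑ c : {x // x ∈ (A i)ᶜ}, Hmat G A (Sum.inl r) ⟨i, c⟩ * x i c = ei A i (x i) r
  rw [ei, mulVecLin_apply]
  show _ = ∑ c : {x // x ∈ (A i)ᶜ}, Emat A i r c * x i c
  refine Finset.sum_congr rfl fun c _ => rfl

lemma Phi_inr (x : ∀ i : Fin ℓ, ({x // x ∈ (A i)ᶜ} → F)) (p : Fin ℓ × Fin k) :
    (Hmat G A).mulVecLin (fun q => x q.1 q.2) (Sum.inr p) = Tmap G A x p := by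
  obtain ⟨i, s⟩ := p
  rw [mulVecLin_apply, Tmap_apply]
  show ∑ q : Σ i : Fin ℓ, {x // x ∈ (A i)ᶜ},
      Hmat G A (Sum.inr (i, s)) q * x q.1 q.2 = _
  rw [← Finset.univ_sigma_univ, Finset.sum_sigma]
  rw [show gi G A i (x i) s = ∑ c : {x // x ∈ (A i)ᶜ},
      (G.submatrix id (fun x : {x // x ∈ (A i)ᶜ} => x.1)) s c * x i c from rfl]
  rw [Fintype.sum_eq_single i]
  · refine Finset.sum_congr rfl fun c _ => ?_
    show (if i = i then G s c.1 else 0) * x i c = _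
    rw [if_pos rfl, submatrix_apply]
    rfl
  · intro i' hi'
    refine Finset.sum_eq_zero fun c _ => ?_
    show (if i = i' then G s c.1 else 0) * x i' c = 0
    rw [if_neg (Ne.symm hi'), zero_mul]

lemma Phi_eq (x : ∀ i : Fin ℓ, ({x // x ∈ (A i)ᶜ} → F)) :
    ((Hmat G A).mulVecLin ∘ₗ
      (LinearEquiv.piCurry F (fun (i : Fin ℓ) (_ : {x // x ∈ (A i)ᶜ}) => F)).symm.toLinearMap) x
    = Sum.elim (Smap A x) (Tmap G A x) := by
  funext q
  cases q with
  | inl r => exact Phi_inl G A x r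
  | inr p => exact Phi_inr G A x p

lemma ker_Phi :
    LinearMap.ker ((Hmat G A).mulVecLin ∘ₗ
      (LinearEquiv.piCurry F (fun (i : Fin ℓ) (_ : {x // x ∈ (A i)ᶜ}) => F)).symm.toLinearMap)
    = LinearMap.ker (Smap A) ⊓ LinearMap.ker (Tmap G A) := by
  ext x
  simp only [LinearMap.mem_ker, Submodule.mem_inf, Phi_eq]
  constructor
  · intro h
    constructor
    · funext r; exact congrFun h (Sum.inl r)
    · funext p; exact congrFun h (Sum.inr p)
  · rintro ⟨h1, h2⟩
    funext q
    cases q with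
    | inl r => exact congrFun h1 r
    | inr p => exact congrFun h2 p

lemma map_S_kerT :
    Submodule.map (Smap A) (LinearMap.ker (Tmap G A))
      = ⨆ i, (coordSub F ((A i)ᶜ) ⊓ LinearMap.ker G.mulVecLin) := by
  apply le_antisymm
  · rintro - ⟨x, hx, rfl⟩
    rw [Smap_apply]
    refine Submodule.sum_mem _ fun i _ => ?_
    refine le_iSup (fun i => coordSub F ((A i)ᶜ) ⊓ LinearMap.ker G.mulVecLin) i ?_
    refine ⟨ei_mem_coordSub A i (x i), ?_⟩
    show _ ∈ LinearMap.ker G.mulVecLin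
    rw [LinearMap.mem_ker, Gm_ei]
    exact (mem_ker_Tmap G A).1 hx i
  · refine iSup_le fun i => ?_
    rintro w ⟨hw1, hw2⟩
    refine ⟨Pi.single i (fun c => w c.1), ?_, ?_⟩
    · show _ ∈ LinearMap.ker (Tmap G A)
      rw [mem_ker_Tmap G A]
      intro i'
      by_cases h : i' = i
      · subst h
        rw [Pi.single_eq_same, ← Gm_ei, ei_restrict A i' w hw1]
        exact LinearMap.mem_ker.1 hw2
      · rw [Pi.single_eq_of_ne h, map_zero]
    · rw [Smap_apply, Finset.sum_eq_single i]
      · rw [Pi.single_eq_same, ei_restrict A i w hw1]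
      · intro i' _ h
        rw [Pi.single_eq_of_ne h, map_zero]
      · intro h
        exact absurd (Finset.mem_univ i) h

lemma ker_Tmap_eq_pi :
    LinearMap.ker (Tmap G A) = Submodule.pi Set.univ (fun i => LinearMap.ker (gi G A i)) := by
  ext x
  rw [mem_ker_Tmap G A, Submodule.mem_pi]
  exact ⟨fun h i _ => h i, fun h i => h i (Set.mem_univ i)⟩

end Maps

/-- product of submodules as a linear equiv -/
def piSubEquiv {ι : Type*} {M : ι → Type*} [∀ i, AddCommGroup (M i)]
    [∀ i, Module F (M i)] (p : ∀ i, Submodule F (M i)) :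
    (∀ i, p i) ≃ₗ[F] (Submodule.pi Set.univ p) where
  toFun x := ⟨fun i => (x i : M i), fun i _ => (x i).2⟩
  map_add' x y := rfl
  map_smul' c x := rfl
  invFun v i := ⟨v.1 i, v.2 i (Set.mem_univ i)⟩
  left_inv x := rfl
  right_inv v := rfl

end DIR


set_option maxHeartbeats 2000000
set_option synthInstance.maxHeartbeats 400000
open DIR

/-- Rank formula for the dual:
`dim(H_{A_1} ∩ … ∩ H_{A_ℓ}) = n − k + Σᵢ rank(G|_{\bar A_i}) − rank ℋ_{A_1,…,A_ℓ}[G]`. -/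
theorem dual_inter_rank {F : Type} [Field F] {n k ℓ : ℕ} (hk : k ≤ n)
    (C : Submodule F (Fin n → F)) (hC : Module.finrank F C = k)
    (G : Matrix (Fin k) (Fin n) F) (hG : Submodule.span F (Set.range G) = C)
    (H : Matrix (Fin (n - k)) (Fin n) F) (hH : ∀ x, x ∈ C ↔ H.mulVec x = 0)
    (A : Fin ℓ → Finset (Fin n)) :
    Module.finrank F (⨅ i, colSpan H (A i) : Submodule F (Fin (n - k) → F))
        + (Hmat G A).rank
      = (n - k) + ∑ i, (G.submatrix id (fun x : {x // x ∈ (A i)ᶜ} => x.1)).rank := by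
  classical
  have hVn : Module.finrank F (Fin n → F) = n := by
    rw [Module.finrank_pi]; exact Fintype.card_fin n
  set Hm := H.mulVecLin with hHmdef
  have hker : LinearMap.ker Hm = C := by
    ext x
    rw [LinearMap.mem_ker, hHmdef, Matrix.mulVecLin_apply]
    exact (hH x).symm
  have hrn := LinearMap.finrank_range_add_finrank_ker Hm
  rw [hker, hC, hVn] at hrn
  have hsurj : LinearMap.range Hm = ⊤ := by
    apply Submodule.eq_top_of_finrank_eq
    rw [Module.finrank_pi, Fintype.card_fin]
    omega
  set P : Fin ℓ → Submodule F (Fin n → F) := fun i => coordSub F (A i) ⊔ C with hPdef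
  set W : Fin ℓ → Submodule F (Fin n → F) :=
    fun i => coordSub F ((A i)ᶜ) ⊓ LinearMap.ker G.mulVecLin with hWdef
  have hCP : ∀ i, C ≤ P i := fun i => le_sup_right
  have hrows : ∀ r, G r ∈ C := fun r => hG ▸ Submodule.subset_span ⟨r, rfl⟩
  have horthP : ∀ i, (Bd F n).orthogonal (P i) = W i := by
    intro i
    apply le_antisymm
    · intro w hw
      rw [LinearMap.BilinForm.mem_orthogonal_iff] at hw
      refine Submodule.mem_inf.2 ⟨?_, ?_⟩
      · intro j hj
        have hj' : j ∈ A i := by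
          by_contra h
          exact hj (Finset.mem_compl.2 h)
        have h1 := hw (Pi.single j 1) (Submodule.mem_sup_left (single_mem_coordSub hj' 1))
        have h2 : (Pi.single j 1 : Fin n → F) ⬝ᵥ w = 0 := h1
        rwa [single_dotProduct, one_mul] at h2
      · rw [LinearMap.mem_ker]
        funext r
        have h1 := hw (G r) (Submodule.mem_sup_right (hrows r))
        have h2 : G r ⬝ᵥ w = 0 := h1
        exact h2
    · intro w hw
      rw [LinearMap.BilinForm.mem_orthogonal_iff]
      intro v hv
      obtain ⟨hw1, hw2⟩ := Submodule.mem_inf.1 hw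
      have hle : P i ≤ LinearMap.ker ((Bd F n).flip w) := by
        refine sup_le ?_ ?_
        · intro v' hv'
          rw [LinearMap.mem_ker]
          show v' ⬝ᵥ w = 0
          refine Finset.sum_eq_zero fun j _ => ?_
          by_cases h : j ∈ A i
          · rw [hw1 j (by simp [Finset.mem_compl, h]), mul_zero]
          · rw [hv' j h, zero_mul]
        · rw [← hG, Submodule.span_le]
          rintro - ⟨r, rfl⟩
          rw [SetLike.mem_coe, LinearMap.mem_ker]
          show G r ⬝ᵥ w = 0
          exact congrFun (LinearMap.mem_ker.1 hw2) r
      exact LinearMap.mem_ker.1 (hle hv)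
  have hPd : ∀ i, P i = (Bd F n).orthogonal (W i) := fun i => by
    rw [← horthP i, LinearMap.BilinForm.orthogonal_orthogonal Bd_nondeg Bd_refl]
  have hU : (⨅ i, P i) = (Bd F n).orthogonal (⨆ i, W i) := by
    rw [orth_iSup]
    exact iInf_congr hPd
  have hE2 : Module.finrank F ↥(⨅ i, P i) + Module.finrank F ↥(⨆ i, W i) = n := by
    rw [hU, LinearMap.BilinForm.finrank_orthogonal Bd_nondeg, hVn]
    have h1 : Module.finrank F ↥(⨆ i, W i) ≤ Module.finrank F (Fin n → F) :=
      Submodule.finrank_le _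
    rw [hVn] at h1
    omega
  have hcolmap : ∀ i, colSpan H (A i) = Submodule.map Hm (P i) := by
    intro i
    show _ = Submodule.map Hm (coordSub F (A i) ⊔ C)
    rw [Submodule.map_sup]
    have h2 : Submodule.map Hm C = ⊥ := by
      rw [Submodule.eq_bot_iff]
      rintro - ⟨y, hy, rfl⟩
      exact LinearMap.mem_ker.1 (hker ▸ hy : y ∈ LinearMap.ker Hm)
    rw [h2, sup_bot_eq, coordSub_eq_span, Submodule.map_span, colSpan]
    congr 1
    rw [Set.image_image]
    refine Set.image_congr fun j _ => ?_
    rw [hHmdef, Matrix.mulVecLin_apply, Matrix.mulVec_single_one]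
    rfl
  have hstep1 : (⨅ i, colSpan H (A i)) = Submodule.map Hm (⨅ i, P i) := by
    apply le_antisymm
    · intro x hx
      have hx' : x ∈ LinearMap.range Hm := by rw [hsurj]; exact Submodule.mem_top
      obtain ⟨y, hy⟩ := hx'
      refine Submodule.mem_map.2 ⟨y, ?_, hy⟩
      rw [Submodule.mem_iInf]
      intro i
      have hxi : x ∈ Submodule.map Hm (P i) := by
        rw [← hcolmap i]
        exact (Submodule.mem_iInf _).1 hx i
      have h3 : y ∈ Submodule.comap Hm (Submodule.map Hm (P i)) := by
        rw [Submodule.mem_comap, hy]; exact hxi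
      rwa [Submodule.comap_map_eq, hker, sup_eq_left.2 (hCP i)] at h3
    · refine le_iInf fun i => ?_
      rw [hcolmap i]
      exact Submodule.map_mono (iInf_le P i)
  have hCU : C ≤ ⨅ i, P i := le_iInf hCP
  have hstep2 : Module.finrank F ↥(Submodule.map Hm (⨅ i, P i)) + k
      = Module.finrank F ↥(⨅ i, P i) := by
    have h := LinearMap.finrank_range_add_finrank_ker (Hm.domRestrict (⨅ i, P i))
    rw [LinearMap.range_domRestrict, LinearMap.ker_domRestrict, hker] at h
    have he : Module.finrank F ↥(Submodule.comap (⨅ i, P i).subtype C) = k := by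
      rw [← hC]
      exact (Submodule.comapSubtypeEquivOfLe hCU).finrank_eq
    rwa [he] at h
  have hE1 : Module.finrank F (⨅ i, colSpan H (A i) : Submodule F (Fin (n - k) → F)) + k
      = Module.finrank F ↥(⨅ i, P i) := by
    rw [hstep1]; exact hstep2
  -- block matrix side
  have h7 := LinearMap.finrank_range_add_finrank_ker ((Hmat G A).mulVecLin ∘ₗ
      (LinearEquiv.piCurry F (fun (i : Fin ℓ) (_ : {x // x ∈ (A i)ᶜ}) => F)).symm.toLinearMap)
  rw [ker_Phi G A, LinearMap.range_comp, LinearEquiv.range, Submodule.map_top,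
    Module.finrank_pi_fintype F] at h7
  have hrankH : (Hmat G A).rank
      = Module.finrank F ↥(LinearMap.range (Hmat G A).mulVecLin) := rfl
  rw [← hrankH] at h7
  have h4 := LinearMap.finrank_range_add_finrank_ker
    ((Smap A).domRestrict (LinearMap.ker (Tmap G A)))
  rw [LinearMap.range_domRestrict, map_S_kerT G A, LinearMap.ker_domRestrict] at h4
  have hcomap : Module.finrank F ↥(Submodule.comap (LinearMap.ker (Tmap G A)).subtype
        (LinearMap.ker (Smap A)))
      = Module.finrank F ↥(LinearMap.ker (Smap A) ⊓ LinearMap.ker (Tmap G A)) := by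
    rw [← Submodule.finrank_map_subtype_eq (LinearMap.ker (Tmap G A)),
      Submodule.map_comap_subtype, inf_comm]
  rw [hcomap] at h4
  have hSWeq : (⨆ i, coordSub F ((A i)ᶜ) ⊓ LinearMap.ker G.mulVecLin) = ⨆ i, W i := rfl
  rw [hSWeq] at h4
  have h5 : Module.finrank F ↥(LinearMap.ker (Tmap G A))
      = ∑ i, Module.finrank F ↥(LinearMap.ker (gi G A i)) := by
    rw [ker_Tmap_eq_pi G A,
      ← (piSubEquiv (fun i => LinearMap.ker (gi G A i))).finrank_eq]
    exact Module.finrank_pi_fintype F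
  rw [h5] at h4
  have h6 : ∑ i, (G.submatrix id (fun x : {x // x ∈ (A i)ᶜ} => x.1)).rank
      + ∑ i, Module.finrank F ↥(LinearMap.ker (gi G A i))
      = ∑ i, Module.finrank F ({x // x ∈ (A i)ᶜ} → F) := by
    rw [← Finset.sum_add_distrib]
    exact Finset.sum_congr rfl fun i _ =>
      LinearMap.finrank_range_add_finrank_ker (gi G A i)
  omega
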